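/- (Main theorem) Let G be a connected graph with cycle basis matrix M (h × m) and extended matrix N ((h+1) × m) incorporating ω with ∂ω = p. Let y_1, ..., y_m : U → R_{>0} and let A : U → Mat_{m×m}(R) be bounded such that M(Y+A)M^T and N(Y+A)N^T are invertible on U (Y = diag(y_i)). Then there exist constants c, C > 0 such that |det(N(Y+A)N^T)/det(M(Y+A)M^T) − det(N Y N^T)/det(M Y M^T)| ≤ c at every point s ∈ U with y_1(s), ..., y_m(s) ≥ C. -/

import Mathlib

open Finset Matrix
open scoped Classical

set_option linter.unusedSectionVars false
set_option linter.unusedVariables false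
set_option maxHeartbeats 2000000

section SectM
variable {m' : Type*} [Fintype m'] {k : ℕ}

/-- Expansion of `det (V * diagonal d * Cᵀ)` over tuples of column indices. -/
lemma aux_det_expand (Vm Cm : Matrix (Fin k) m' ℝ) (d : m' → ℝ) :
    (Vm * Matrix.diagonal d * Cmᵀ).det
      = ∑ f : Fin k → m', (∏ i, Cm i (f i) * d (f i)) * (Vm.submatrix id f).det := by
  have h0 : (Vm * Matrix.diagonal d * Cmᵀ).det = (Cm * Matrix.diagonal d * Vmᵀ).det := by
    rw [← Matrix.det_transpose]
    congr 1
    rw [Matrix.transpose_mul, Matrix.transpose_mul, Matrix.transpose_transpose,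
      Matrix.diagonal_transpose, Matrix.mul_assoc]
  rw [h0]
  have h1 : (Cm * Matrix.diagonal d * Vmᵀ) =
      Matrix.of (fun i => ∑ e : m', (Cm i e * d e) • (fun j => Vm j e)) := by
    ext i j
    simp only [Matrix.mul_apply, Matrix.of_apply, Matrix.mul_diagonal, Matrix.transpose_apply]
    rw [Finset.sum_apply]
    simp only [smul_eq_mul, Pi.smul_apply]
    refine Finset.sum_congr rfl fun x _ => ?_
    simp [Matrix.diagonal_apply, ite_mul, mul_ite, mul_zero, zero_mul, Finset.sum_ite_eq,
      Finset.sum_ite_eq']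
  rw [h1]
  have h2 : (Matrix.of (fun i => ∑ e : m', (Cm i e * d e) • (fun j => Vm j e)) :
      Matrix (Fin k) (Fin k) ℝ).det
      = ∑ f : Fin k → m',
          (Matrix.detRowAlternating (fun i => (Cm i (f i) * d (f i)) • (fun j => Vm j (f i)))) := by
    exact (Matrix.detRowAlternating (R := ℝ) (n := Fin k)).toMultilinearMap.map_sum
      (g := fun i e => (Cm i e * d e) • (fun j => Vm j e))
  rw [h2]
  refine Finset.sum_congr rfl fun f _ => ?_
  have h3 : (Matrix.detRowAlternating (fun i => (Cm i (f i) * d (f i)) • (fun j => Vm j (f i))))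
      = (Matrix.of fun i j => (Cm i (f i) * d (f i)) * Vm j (f i)).det := rfl
  rw [h3, show (Matrix.of fun i j => (Cm i (f i) * d (f i)) * Vm j (f i)) = Matrix.of fun i j =>
      (fun i => Cm i (f i) * d (f i)) i * (Matrix.of fun i j => Vm j (f i)) i j from rfl,
    Matrix.det_mul_column]
  congr 1
  have h4 : (Matrix.of fun i j => Vm j (f i)) = (Vm.submatrix id f)ᵀ := by
    ext i j
    simp [Matrix.transpose_apply, Matrix.submatrix_apply]
  rw [h4,
    Matrix.det_transpose]

lemma aux_det_submatrix (Cm : Matrix (Fin k) m' ℝ) (f : Fin k → m') :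
    (Cm.submatrix id f).det
      = ∑ σ : Equiv.Perm (Fin k), ((Equiv.Perm.sign σ : ℤ) : ℝ) * ∏ i, Cm i (f (σ i)) := by
  rw [← Matrix.det_transpose, Matrix.det_apply]
  simp only [Units.smul_def, zsmul_eq_mul, Matrix.transpose_apply, Matrix.submatrix_apply, id]

lemma aux_sign_mul_self (σ : Equiv.Perm (Fin k)) :
    ((Equiv.Perm.sign σ : ℤ) : ℝ) * ((Equiv.Perm.sign σ : ℤ) : ℝ) = 1 := by
  rcases Int.units_eq_one_or (Equiv.Perm.sign σ) with h | h <;> rw [h] <;> norm_num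

/-- Symmetrized Cauchy–Binet with a diagonal middle factor. -/
lemma aux_cb (Vm Cm : Matrix (Fin k) m' ℝ) (d : m' → ℝ) :
    (Nat.factorial k : ℝ) * (Vm * Matrix.diagonal d * Cmᵀ).det
      = ∑ f : Fin k → m',
          (Vm.submatrix id f).det * (Cm.submatrix id f).det * ∏ i, d (f i) := by
  have key : ∀ σ : Equiv.Perm (Fin k), ∀ f : Fin k → m',
      (Vm.submatrix id (f ∘ ⇑σ⁻¹)).det
        = ((Equiv.Perm.sign σ : ℤ) : ℝ) * (Vm.submatrix id f).det := by
    intro σ f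
    have h1 : Vm.submatrix id (f ∘ ⇑σ⁻¹) = (Vm.submatrix id f).submatrix id ⇑σ⁻¹ := by
      rw [Matrix.submatrix_submatrix]; rfl
    rw [h1, Matrix.det_permute', Equiv.Perm.sign_inv]
  calc (Nat.factorial k : ℝ) * (Vm * Matrix.diagonal d * Cmᵀ).det
      = ∑ _σ : Equiv.Perm (Fin k), (Vm * Matrix.diagonal d * Cmᵀ).det := by
        rw [Finset.sum_const, Finset.card_univ, Fintype.card_perm, Fintype.card_fin,
          nsmul_eq_mul]
    _ = ∑ σ : Equiv.Perm (Fin k), ∑ f : Fin k → m',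
          ((Equiv.Perm.sign σ : ℤ) : ℝ) * (Vm.submatrix id f).det
            * ∏ i, Cm i (f (σ i)) * d (f i) := by
        refine Finset.sum_congr rfl fun σ _ => ?_
        rw [aux_det_expand]
        rw [← Equiv.sum_comp (Equiv.arrowCongr σ (Equiv.refl m'))
          (fun f => ((Equiv.Perm.sign σ : ℤ) : ℝ) * (Vm.submatrix id f).det
            * ∏ i, Cm i (f (σ i)) * d (f i))]
        refine Finset.sum_congr rfl fun f _ => ?_
        have he : ((Equiv.arrowCongr σ (Equiv.refl m')) f) = f ∘ ⇑σ⁻¹ := by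
          funext x; rfl
        rw [he, key σ f]
        simp only [Function.comp_apply, show ∀ x, σ⁻¹ (σ x) = x from σ.symm_apply_apply]
        rw [Finset.prod_mul_distrib, Finset.prod_mul_distrib]
        have hd : (∏ i, d (f (σ⁻¹ i))) = ∏ i, d (f i) :=
          Equiv.prod_comp σ⁻¹ (fun i => d (f i))
        rw [hd]
        have hs := aux_sign_mul_self σ
        linear_combination (-((Vm.submatrix id f).det
          * ((∏ i, Cm i (f i)) * ∏ i, d (f i)))) * hs
    _ = ∑ f : Fin k → m', (Vm.submatrix id f).det
          * (∑ σ : Equiv.Perm (Fin k), ((Equiv.Perm.sign σ : ℤ) : ℝ) * ∏ i, Cm i (f (σ i)))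
          * ∏ i, d (f i) := by
        rw [Finset.sum_comm]
        refine Finset.sum_congr rfl fun f _ => ?_
        rw [Finset.mul_sum, Finset.sum_mul]
        refine Finset.sum_congr rfl fun σ _ => ?_
        rw [Finset.prod_mul_distrib]
        ring
    _ = _ := by
        refine Finset.sum_congr rfl fun f _ => ?_
        rw [← aux_det_submatrix]


/-- The constant comparing minors of `Cm` against minors of `Wm`. -/
noncomputable def auxB (Wm Cm : Matrix (Fin k) m' ℝ) : ℝ :=
  ∑ f : Fin k → m', (if (Wm.submatrix id f).det = 0 then 0
    else |(Cm.submatrix id f).det| / |(Wm.submatrix id f).det|)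

lemma auxB_nonneg (Wm Cm : Matrix (Fin k) m' ℝ) : 0 ≤ auxB Wm Cm := by
  refine Finset.sum_nonneg fun f _ => ?_
  split
  · exact le_refl 0
  · positivity

lemma aux_detWW_nonneg (Wm : Matrix (Fin k) m' ℝ) (d : m' → ℝ) (hd : ∀ e, 0 ≤ d e) :
    0 ≤ (Wm * Matrix.diagonal d * Wmᵀ).det := by
  have h := aux_cb Wm Wm d
  have hfac : (0:ℝ) < (Nat.factorial k : ℝ) := by positivity
  have hsum : 0 ≤ ∑ f : Fin k → m',
      (Wm.submatrix id f).det * (Wm.submatrix id f).det * ∏ i, d (f i) := by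
    refine Finset.sum_nonneg fun f _ => ?_
    have : 0 ≤ ∏ i, d (f i) := Finset.prod_nonneg fun i _ => hd _
    nlinarith [sq_nonneg (Wm.submatrix id f).det]
  nlinarith

lemma aux_det_ratio (Wm Cm : Matrix (Fin k) m' ℝ) (d : m' → ℝ) (hd : ∀ e, 0 ≤ d e) :
    |(Wm * Matrix.diagonal d * Cmᵀ).det|
      ≤ auxB Wm Cm * (Wm * Matrix.diagonal d * Wmᵀ).det := by
  have hfac : (0:ℝ) < (Nat.factorial k : ℝ) := by positivity
  rw [← mul_le_mul_iff_right₀ hfac]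
  calc (Nat.factorial k : ℝ) * |(Wm * Matrix.diagonal d * Cmᵀ).det|
      = |(Nat.factorial k : ℝ) * (Wm * Matrix.diagonal d * Cmᵀ).det| := by
        rw [abs_mul, abs_of_pos hfac]
    _ = |∑ f : Fin k → m',
          (Wm.submatrix id f).det * (Cm.submatrix id f).det * ∏ i, d (f i)| := by
        rw [aux_cb]
    _ ≤ ∑ f : Fin k → m',
          |(Wm.submatrix id f).det * (Cm.submatrix id f).det * ∏ i, d (f i)| :=
        Finset.abs_sum_le_sum_abs _ _
    _ ≤ ∑ f : Fin k → m',
          (if (Wm.submatrix id f).det = 0 then 0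
            else |(Cm.submatrix id f).det| / |(Wm.submatrix id f).det|)
          * ((Wm.submatrix id f).det * (Wm.submatrix id f).det * ∏ i, d (f i)) := by
        refine Finset.sum_le_sum fun f _ => ?_
        have hp : 0 ≤ ∏ i, d (f i) := Finset.prod_nonneg fun i _ => hd _
        by_cases hw : (Wm.submatrix id f).det = 0
        · simp [hw]
        · rw [if_neg hw, abs_mul, abs_mul, abs_of_nonneg hp]
          have h1 : |(Wm.submatrix id f).det| * |(Cm.submatrix id f).det|
              = (|(Cm.submatrix id f).det| / |(Wm.submatrix id f).det|)
                * ((Wm.submatrix id f).det * (Wm.submatrix id f).det) := by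
            have habs : (Wm.submatrix id f).det * (Wm.submatrix id f).det
                = |(Wm.submatrix id f).det| * |(Wm.submatrix id f).det| := by
              rw [← abs_mul, abs_of_nonneg (mul_self_nonneg _)]
            rw [habs]
            field_simp
          rw [h1, mul_assoc]
    _ ≤ ∑ f : Fin k → m',
          auxB Wm Cm
          * ((Wm.submatrix id f).det * (Wm.submatrix id f).det * ∏ i, d (f i)) := by
        refine Finset.sum_le_sum fun f _ => ?_
        refine mul_le_mul_of_nonneg_right ?_ ?_
        · refine Finset.single_le_sum (f := fun f => (if (Wm.submatrix id f).det = 0 then 0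
            else |(Cm.submatrix id f).det| / |(Wm.submatrix id f).det|)) (fun g _ => ?_) (Finset.mem_univ f)
          rcases eq_or_ne (Wm.submatrix id g).det 0 with hg | hg
          · simp [hg]
          · simp only [if_neg hg]
            positivity
        · have hp : 0 ≤ ∏ i, d (f i) := Finset.prod_nonneg fun i _ => hd _
          nlinarith [sq_nonneg (Wm.submatrix id f).det]
    _ = auxB Wm Cm * ((Nat.factorial k : ℝ) * (Wm * Matrix.diagonal d * Wmᵀ).det) := by
        rw [← Finset.mul_sum, aux_cb]
    _ = (Nat.factorial k : ℝ) * (auxB Wm Cm * (Wm * Matrix.diagonal d * Wmᵀ).det) := by ring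


/-- The coordinates of `(W D Wᵀ)⁻¹ W D ω` are bounded by constants independent of `D`. -/
lemma aux_solution_bound (Wm : Matrix (Fin k) m' ℝ) (ωv : m' → ℝ) (d : m' → ℝ)
    (hd : ∀ e, 0 ≤ d e) (hK : IsUnit (Wm * Matrix.diagonal d * Wmᵀ).det) (i : Fin k) :
    |((Wm * Matrix.diagonal d * Wmᵀ)⁻¹ *ᵥ ((Wm * Matrix.diagonal d) *ᵥ ωv)) i|
      ≤ auxB Wm (Wm.updateRow i ωv) := by
  set K := Wm * Matrix.diagonal d * Wmᵀ with hKdef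
  set b := (Wm * Matrix.diagonal d) *ᵥ ωv with hbdef
  set x := K⁻¹ *ᵥ b with hxdef
  have hKx : K *ᵥ x = b := by
    rw [hxdef, Matrix.mulVec_mulVec, Matrix.mul_nonsing_inv _ hK, Matrix.one_mulVec]
  have hcr : K.cramer b = K.det • x := by
    rw [Matrix.cramer_eq_adjugate_mulVec, ← hKx, Matrix.mulVec_mulVec, Matrix.adjugate_mul,
      Matrix.smul_mulVec, Matrix.one_mulVec]
  have hxi : K.det * x i = (K.updateCol i b).det := by
    have h1 := congrFun hcr i
    rw [Matrix.cramer_apply] at h1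
    rw [h1, Pi.smul_apply, smul_eq_mul]
  have hup : K.updateCol i b = Wm * Matrix.diagonal d * (Wm.updateRow i ωv)ᵀ := by
    ext a j
    rw [Matrix.updateCol_apply]
    by_cases hj : j = i
    · rw [if_pos hj, hbdef, Matrix.mulVec, dotProduct, Matrix.mul_apply]
      refine Finset.sum_congr rfl fun e _ => ?_
      rw [Matrix.transpose_apply, hj, Matrix.updateRow_self]
    · rw [if_neg hj, hKdef, Matrix.mul_apply, Matrix.mul_apply]
      refine Finset.sum_congr rfl fun e _ => ?_
      rw [Matrix.transpose_apply, Matrix.transpose_apply, Matrix.updateRow_apply, if_neg hj]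
  have hdetpos : 0 < K.det :=
    lt_of_le_of_ne (aux_detWW_nonneg Wm d hd) (Ne.symm hK.ne_zero)
  have hb : |x i| * K.det ≤ auxB Wm (Wm.updateRow i ωv) * K.det := by
    have h2 : |x i| * K.det = |K.det * x i| := by
      rw [abs_mul, abs_of_pos hdetpos]; ring
    rw [h2, hxi, hup]
    exact aux_det_ratio Wm (Wm.updateRow i ωv) d hd
  exact le_of_mul_le_mul_right hb hdetpos


end SectM

section SectV
variable {ι κ : Type*} [Fintype ι] [Fintype κ]


lemma aux_entry_le_sum (v : ι → ℝ) (i : ι) : |v i| ≤ ∑ j, |v j| :=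
  Finset.single_le_sum (fun j _ => abs_nonneg (v j)) (Finset.mem_univ i)

lemma aux_dot_bound (x y : ι → ℝ) (bx by_ : ℝ) (hbx : 0 ≤ bx)
    (hx : ∀ i, |x i| ≤ bx) (hy : ∀ i, |y i| ≤ by_) :
    |x ⬝ᵥ y| ≤ (Fintype.card ι : ℝ) * bx * by_ := by
  calc |x ⬝ᵥ y| ≤ ∑ i, |x i * y i| := Finset.abs_sum_le_sum_abs _ _
    _ ≤ ∑ _i : ι, bx * by_ := by
        refine Finset.sum_le_sum fun i _ => ?_
        rw [abs_mul]
        exact mul_le_mul (hx i) (hy i) (abs_nonneg _) hbx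
    _ = (Fintype.card ι : ℝ) * bx * by_ := by
        rw [Finset.sum_const, Finset.card_univ, nsmul_eq_mul, mul_assoc]

lemma aux_mulVec_bound (W : Matrix ι κ ℝ) (v : κ → ℝ) (bW bv : ℝ) (hbW : 0 ≤ bW)
    (hW : ∀ i e, |W i e| ≤ bW) (hv : ∀ e, |v e| ≤ bv) (i : ι) :
    |(W *ᵥ v) i| ≤ (Fintype.card κ : ℝ) * bW * bv :=
  aux_dot_bound (W i) v bW bv hbW (hW i) hv

lemma aux_dot_self_nonneg (v : ι → ℝ) : 0 ≤ v ⬝ᵥ v :=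
  Finset.sum_nonneg fun i _ => mul_self_nonneg (v i)

lemma aux_quad_inv_bound {k : ℕ} (K : Matrix (Fin k) (Fin k) ℝ) (hK : IsUnit K.det)
    (hq : ∀ x : Fin k → ℝ, x ⬝ᵥ x ≤ x ⬝ᵥ (K *ᵥ x)) (v : Fin k → ℝ) (bv : ℝ) (hbv : 0 ≤ bv)
    (hv : ∀ i, |v i| ≤ bv) (i : Fin k) : |(K⁻¹ *ᵥ v) i| ≤ (k : ℝ) * bv := by
  set w := K⁻¹ *ᵥ v with hwdef
  have hKw : K *ᵥ w = v := by
    rw [hwdef, Matrix.mulVec_mulVec, Matrix.mul_nonsing_inv _ hK, Matrix.one_mulVec]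
  have h1 : w ⬝ᵥ w ≤ w ⬝ᵥ v := by have := hq w; rwa [hKw] at this
  have h2 : (w ⬝ᵥ v) ^ 2 ≤ (w ⬝ᵥ w) * (v ⬝ᵥ v) := by
    have := Finset.sum_mul_sq_le_sq_mul_sq Finset.univ w v
    calc (w ⬝ᵥ v) ^ 2 = (∑ j, w j * v j) ^ 2 := rfl
      _ ≤ (∑ j, w j ^ 2) * ∑ j, v j ^ 2 := this
      _ = (w ⬝ᵥ w) * (v ⬝ᵥ v) := by
          unfold dotProduct
          congr 1 <;> exact Finset.sum_congr rfl fun j _ => (pow_two _)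
  have hvv : v ⬝ᵥ v ≤ (Fintype.card (Fin k) : ℝ) * (bv * bv) := by
    calc v ⬝ᵥ v = ∑ j, v j * v j := rfl
      _ ≤ ∑ _j : Fin k, bv * bv := by
          refine Finset.sum_le_sum fun j _ => ?_
          have := hv j
          nlinarith [abs_nonneg (v j), neg_abs_le (v j), le_abs_self (v j)]
      _ = (Fintype.card (Fin k) : ℝ) * (bv * bv) := by
          rw [Finset.sum_const, Finset.card_univ, nsmul_eq_mul]
  have hww : w ⬝ᵥ w ≤ v ⬝ᵥ v := by
    rcases (aux_dot_self_nonneg w).eq_or_lt with h0 | h0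
    · rw [← h0]; exact aux_dot_self_nonneg v
    · nlinarith [h0, h1, h2, aux_dot_self_nonneg v]
  have hwi : (w i) * (w i) ≤ w ⬝ᵥ w :=
    Finset.single_le_sum (f := fun j => w j * w j) (fun j _ => mul_self_nonneg _)
      (Finset.mem_univ i)
  have hk1 : (1 : ℝ) ≤ (k : ℝ) := by have := i.pos; exact_mod_cast this
  have hsq : |w i| ^ 2 ≤ ((k : ℝ) * bv) ^ 2 := by
    have hcard : (Fintype.card (Fin k) : ℝ) = (k : ℝ) := by rw [Fintype.card_fin]
    calc |w i| ^ 2 = w i * w i := by rw [sq_abs, pow_two]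
      _ ≤ v ⬝ᵥ v := le_trans hwi hww
      _ ≤ (k : ℝ) * (bv * bv) := by rw [← hcard]; exact hvv
      _ ≤ ((k : ℝ) * bv) ^ 2 := by nlinarith
  have := abs_nonneg (w i)
  nlinarith [hsq, mul_nonneg (le_trans zero_le_one hk1) hbv]


lemma aux_dot_self_eq_zero (v : ι → ℝ) (h : v ⬝ᵥ v = 0) : v = 0 := by
  funext i
  have h2 := (Finset.sum_eq_zero_iff_of_nonneg
    (fun j (_ : j ∈ Finset.univ) => mul_self_nonneg (v j))).mp h i (Finset.mem_univ i)
  exact mul_self_eq_zero.mp h2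

lemma aux_dot_self_pos (v : ι → ℝ) (h : v ≠ 0) : 0 < v ⬝ᵥ v := by
  rcases (Finset.sum_nonneg fun j _ => mul_self_nonneg (v j)).eq_or_lt with h0 | h0
  · exact absurd (aux_dot_self_eq_zero v h0.symm) h
  · exact h0

lemma aux_vec_bound (v : ι → ℝ) : ∃ b : ℝ, 0 ≤ b ∧ ∀ i, |v i| ≤ b :=
  ⟨∑ j, |v j|, Finset.sum_nonneg fun j _ => abs_nonneg _,
    fun i => Finset.single_le_sum (fun j _ => abs_nonneg (v j)) (Finset.mem_univ i)⟩

lemma aux_mat_bound (W : Matrix ι κ ℝ) : ∃ b : ℝ, 0 ≤ b ∧ ∀ i j, |W i j| ≤ b := by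
  obtain ⟨b, hb0, hb⟩ := aux_vec_bound (fun p : ι × κ => W p.1 p.2)
  exact ⟨b, hb0, fun i j => hb (i, j)⟩

lemma aux_quad_compare (L : Matrix ι κ ℝ) (g : κ → ℝ) :
    (L *ᵥ g) ⬝ᵥ (L *ᵥ g) ≤ (∑ i, ∑ e, (L i e) ^ 2) * (g ⬝ᵥ g) := by
  have hge : g ⬝ᵥ g = ∑ e, (g e) ^ 2 := Finset.sum_congr rfl fun e _ => (pow_two _).symm
  calc (L *ᵥ g) ⬝ᵥ (L *ᵥ g) = ∑ i, ((L *ᵥ g) i) * ((L *ᵥ g) i) := rfl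
    _ ≤ ∑ i, (∑ e, (L i e) ^ 2) * (∑ e, (g e) ^ 2) := by
        refine Finset.sum_le_sum fun i _ => ?_
        have h1 : (L *ᵥ g) i = ∑ e, L i e * g e := rfl
        have h2 := Finset.sum_mul_sq_le_sq_mul_sq Finset.univ (L i) g
        calc (L *ᵥ g) i * (L *ᵥ g) i = (∑ e, L i e * g e) ^ 2 := by rw [h1, pow_two]
          _ ≤ (∑ e, (L i e) ^ 2) * (∑ e, (g e) ^ 2) := h2
    _ = (∑ i, ∑ e, (L i e) ^ 2) * (g ⬝ᵥ g) := by rw [hge, Finset.sum_mul]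

lemma aux_bilin (A : Matrix κ κ ℝ) (Kb : ℝ) (hKb : 0 ≤ Kb) (hA : ∀ e f, |A e f| ≤ Kb)
    (g : κ → ℝ) : |(A *ᵥ g) ⬝ᵥ g| ≤ (Fintype.card κ : ℝ) * Kb * (g ⬝ᵥ g) := by
  have habs : ∀ e, |(A *ᵥ g) e| ≤ Kb * ∑ f, |g f| := by
    intro e
    calc |(A *ᵥ g) e| ≤ ∑ f, |A e f * g f| := Finset.abs_sum_le_sum_abs _ _
      _ ≤ ∑ f, Kb * |g f| := by
          refine Finset.sum_le_sum fun f _ => ?_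
          rw [abs_mul]
          exact mul_le_mul_of_nonneg_right (hA e f) (abs_nonneg _)
      _ = Kb * ∑ f, |g f| := by rw [Finset.mul_sum]
  have hsumabs : (∑ f, |g f|) * (∑ f, |g f|) ≤ (Fintype.card κ : ℝ) * (g ⬝ᵥ g) := by
    have h2 := Finset.sum_mul_sq_le_sq_mul_sq Finset.univ (fun f => |g f|) (fun _ => (1:ℝ))
    simp only [mul_one, one_pow] at h2
    have hge : g ⬝ᵥ g = ∑ e, (|g e|) ^ 2 := by
      refine Finset.sum_congr rfl fun e _ => ?_
      rw [sq_abs, pow_two]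
    calc (∑ f, |g f|) * (∑ f, |g f|) = (∑ f, |g f|) ^ 2 := (pow_two _).symm
      _ ≤ (∑ f, |g f| ^ 2) * ∑ _f : κ, (1:ℝ) := h2
      _ = (Fintype.card κ : ℝ) * (g ⬝ᵥ g) := by
          rw [hge, Finset.sum_const, Finset.card_univ, nsmul_eq_mul, mul_one, mul_comm]
  have hnn : 0 ≤ ∑ f, |g f| := Finset.sum_nonneg fun f _ => abs_nonneg _
  calc |(A *ᵥ g) ⬝ᵥ g| ≤ ∑ e, |(A *ᵥ g) e * g e| := Finset.abs_sum_le_sum_abs _ _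
    _ ≤ ∑ e, (Kb * ∑ f, |g f|) * |g e| := by
        refine Finset.sum_le_sum fun e _ => ?_
        rw [abs_mul]
        exact mul_le_mul_of_nonneg_right (habs e) (abs_nonneg _)
    _ = Kb * ((∑ f, |g f|) * (∑ f, |g f|)) := by
        rw [← Finset.mul_sum]
        ring
    _ ≤ Kb * ((Fintype.card κ : ℝ) * (g ⬝ᵥ g)) := mul_le_mul_of_nonneg_left hsumabs hKb
    _ = (Fintype.card κ : ℝ) * Kb * (g ⬝ᵥ g) := by ring


end SectV

section SectM2
variable {m' : Type*} [Fintype m'] {k : ℕ}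


lemma aux_dot3 {a b : Type*} [Fintype a] [Fintype b] (u : a → ℝ) (X : Matrix a b ℝ)
    (v : b → ℝ) : ∑ f, (∑ e, u e * X e f) * v f = u ⬝ᵥ (X *ᵥ v) := by
  calc ∑ f, (∑ e, u e * X e f) * v f = ∑ f, ∑ e, u e * X e f * v f := by
        refine Finset.sum_congr rfl fun f _ => ?_
        rw [Finset.sum_mul]
    _ = ∑ e, ∑ f, u e * X e f * v f := Finset.sum_comm
    _ = u ⬝ᵥ (X *ᵥ v) := by
        refine Finset.sum_congr rfl fun e _ => ?_
        rw [show (X *ᵥ v) e = ∑ f, X e f * v f from rfl, Finset.mul_sum]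
        exact Finset.sum_congr rfl fun f _ => (mul_assoc _ _ _)

lemma aux_flip {a b : Type*} [Fintype a] [Fintype b] (u : a → ℝ) (X : Matrix a b ℝ)
    (v : b → ℝ) : u ⬝ᵥ (X *ᵥ v) = v ⬝ᵥ (Xᵀ *ᵥ u) := by
  rw [Matrix.dotProduct_mulVec, ← Matrix.transpose_transpose X, Matrix.vecMul_transpose,
    Matrix.transpose_transpose, dotProduct_comm]

lemma aux_prod_entry {a b c : Type*} [Fintype a] [Fintype b] [Fintype c]
    (P : Matrix a b ℝ) (X : Matrix b c ℝ) (i : a) (j : c) (Q : Matrix b c ℝ) :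
    (P * X) i j = ∑ e, P i e * X e j := Matrix.mul_apply

lemma aux_row_form {n' : Type*} [Fintype n'] (Nm : Matrix n' m' ℝ) (X : Matrix m' m' ℝ)
    (a c : n') : (Nm * X * Nmᵀ) a c = (Nm a) ⬝ᵥ (X *ᵥ (Nm c)) := by
  rw [← aux_dot3 (Nm a) X (Nm c)]
  rw [Matrix.mul_apply]
  refine Finset.sum_congr rfl fun f _ => ?_
  rw [Matrix.mul_apply, Matrix.transpose_apply]

/-- Schur-complement formula for the bordered determinant. -/
lemma aux_schur (Nm : Matrix (Fin (k+1)) m' ℝ) (Wm : Matrix (Fin k) m' ℝ) (ωv : m' → ℝ)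
    (hN1 : ∀ i : Fin k, Nm i.castSucc = Wm i) (hN2 : Nm (Fin.last k) = ωv)
    (X : Matrix m' m' ℝ) (hK : IsUnit (Wm * X * Wmᵀ).det) :
    (Nm * X * Nmᵀ).det = (Wm * X * Wmᵀ).det *
      (ωv ⬝ᵥ (X *ᵥ ωv) -
        (Wm *ᵥ (Xᵀ *ᵥ ωv)) ⬝ᵥ ((Wm * X * Wmᵀ)⁻¹ *ᵥ (Wm *ᵥ (X *ᵥ ωv)))) := by
  set K := Wm * X * Wmᵀ with hKdef
  set Bb : Matrix (Fin k) (Fin 1) ℝ := Matrix.of fun i _ => (Wm *ᵥ (X *ᵥ ωv)) i with hBdef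
  set Cc : Matrix (Fin 1) (Fin k) ℝ := Matrix.of fun _ j => (Wm *ᵥ (Xᵀ *ᵥ ωv)) j with hCdef
  set Dd : Matrix (Fin 1) (Fin 1) ℝ := Matrix.of fun _ _ => ωv ⬝ᵥ (X *ᵥ ωv) with hDdef
  have hcast : ∀ i : Fin k, Nm (Fin.castAdd 1 i) = Wm i := fun i => hN1 i
  have hlast : ∀ j : Fin 1, Nm (Fin.natAdd k j) = ωv := by
    intro j
    have hj : (Fin.natAdd k j : Fin (k+1)) = Fin.last k := by
      have : j = 0 := Subsingleton.elim _ _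
      subst this
      ext
      simp [Fin.natAdd, Fin.last]
    rw [hj, hN2]
  have hsub : ((Nm * X * Nmᵀ).submatrix (finSumFinEquiv (m := k) (n := 1))
      (finSumFinEquiv (m := k) (n := 1))) = Matrix.fromBlocks K Bb Cc Dd := by
    ext a c
    rcases a with i | i <;> rcases c with j | j <;>
      simp only [Matrix.submatrix_apply, finSumFinEquiv_apply_left, finSumFinEquiv_apply_right,
        Matrix.fromBlocks_apply₁₁, Matrix.fromBlocks_apply₁₂, Matrix.fromBlocks_apply₂₁,
        Matrix.fromBlocks_apply₂₂, aux_row_form]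
    · rw [hcast i, hcast j, hKdef, aux_row_form]
    · rw [hcast i, hlast j]
      rfl
    · rw [hlast i, hcast j, aux_flip]
      rfl
    · rw [hlast i, hlast j]
      rfl
  have hdet1 : (Nm * X * Nmᵀ).det = (Matrix.fromBlocks K Bb Cc Dd).det := by
    rw [← Matrix.det_submatrix_equiv_self (finSumFinEquiv (m := k) (n := 1)), hsub]
  haveI : Invertible K := Matrix.invertibleOfIsUnitDet K hK
  rw [hdet1, Matrix.det_fromBlocks₁₁, Matrix.invOf_eq_nonsing_inv]
  congr 1
  rw [Matrix.det_fin_one, Matrix.sub_apply]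
  congr 1
  rw [show (Cc * K⁻¹ * Bb) 0 0 = ∑ f, (∑ e, Cc 0 e * K⁻¹ e f) * Bb f 0 from ?_,
    aux_dot3 (Cc 0) K⁻¹ (fun f => Bb f 0)]
  · rfl
  · rw [Matrix.mul_apply]
    refine Finset.sum_congr rfl fun f _ => ?_
    rw [Matrix.mul_apply]

end SectM2

variable {V E : Type*}

/-- Two vertices are joined by an edge of the edge set `S`. -/
def adjRel (src tgt : E → V) (S : Finset E) (u v : V) : Prop :=
  ∃ e ∈ S, (src e = u ∧ tgt e = v) ∨ (src e = v ∧ tgt e = u)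

/-- Reachability using only edges in `S`. -/
def reach (src tgt : E → V) (S : Finset E) : V → V → Prop :=
  Relation.EqvGen (adjRel src tgt S)

/-- Number of connected components of the spanning subgraph with edge set `S`. -/
noncomputable def nComp (src tgt : E → V) (S : Finset E) : ℕ :=
  Nat.card (Quotient (Relation.EqvGen.setoid (adjRel src tgt S)))

/-- A spanning tree: connected spanning subgraph with `|V| - 1` edges. -/
def IsSpanningTree (src tgt : E → V) [Fintype V] (S : Finset E) : Prop :=
  nComp src tgt S = 1 ∧ S.card + 1 = Fintype.card V

/-- A spanning 2-forest: spanning subgraph with exactly two connected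
components and `|V| - 2` edges (hence acyclic). -/
def IsSpanning2Forest (src tgt : E → V) [Fintype V] (S : Finset E) : Prop :=
  nComp src tgt S = 2 ∧ S.card + 2 = Fintype.card V

/-- The edges of `S` with both endpoints in `X` (edge set of the induced subgraph `S[X]`). -/
noncomputable def inducedEdges (src tgt : E → V) (S : Finset E) (X : Finset V) : Finset E :=
  S.filter fun e => src e ∈ X ∧ tgt e ∈ X

/-- The induced subgraph `S[X]` is a (spanning) tree on the vertex set `X`. -/
def IsTreeOn (src tgt : E → V) (X : Finset V) (S : Finset E) : Prop :=
  (inducedEdges src tgt S X).card + 1 = X.card ∧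
    ∀ u ∈ X, ∀ v ∈ X, reach src tgt (inducedEdges src tgt S X) u v

/-- `X` is saturated w.r.t. the (multi)graph with all edges `E`:
the induced subgraph has exactly `2|X| - 2` edges. -/
def Saturated (src tgt : E → V) [Fintype E] (X : Finset V) : Prop :=
  X.Nonempty ∧ (inducedEdges src tgt Finset.univ X).card + 2 = 2 * X.card

/-- The boundary map `∂ : R^E → R^V`, `e ↦ head(e) - tail(e)`. -/
noncomputable def bnd {R : Type*} [Ring R] [Fintype E] (src tgt : E → V) (ω : E → R) : V → R :=
  fun v => ∑ e, ω e * ((if tgt e = v then (1 : R) else 0) - (if src e = v then (1 : R) else 0))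

/-- The rows of `M` form an integral basis of `H₁(G, ℤ) = ker (∂ : ℤ^E → ℤ^V)`. -/
def IsCycleBasis [Fintype E] {h : ℕ} (src tgt : E → V) (M : Fin h → E → ℤ) : Prop :=
  (∀ i, bnd src tgt (M i) = 0) ∧ LinearIndependent ℤ M ∧
    ∀ x : E → ℤ, bnd src tgt x = 0 → x ∈ Submodule.span ℤ (Set.range M)

/-- The real matrix with the same entries as the integer matrix `M`. -/
noncomputable def rmat {h : ℕ} (M : Fin h → E → ℤ) : Matrix (Fin h) E ℝ :=
  Matrix.of fun i e => (M i e : ℝ)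

/-- Main theorem: With `M` the cycle basis matrix, `N` its
extension by `ω` (`∂ω = p`), continuous positive functions `y_e : U → ℝ` on a
topological space `U`, and a bounded perturbation `A : U → Mat_{m×m}(ℝ)` such
that `M(Y+A)Mᵀ` and `N(Y+A)Nᵀ` are invertible, the difference
`det(N(Y+A)Nᵀ)/det(M(Y+A)Mᵀ) − det(N Y Nᵀ)/det(M Y Mᵀ)` is `O_y(1)`. -/
theorem stmt_13 {U : Type*} [TopologicalSpace U]
    [Fintype V] [Fintype E] (src tgt : E → V)
    (hconn : nComp src tgt (Finset.univ : Finset E) = 1)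
    {h : ℕ} (hh : h + Fintype.card V = Fintype.card E + 1)
    (M : Fin h → E → ℤ) (hM : IsCycleBasis src tgt M)
    (p : V → ℝ) (hp : ∑ v, p v = 0)
    (ω : E → ℝ) (hω : bnd src tgt ω = p)
    (N : Fin (h + 1) → E → ℝ)
    (hN1 : ∀ i : Fin h, N i.castSucc = fun e => (M i e : ℝ))
    (hN2 : N (Fin.last h) = ω)
    (y : E → U → ℝ) (hypos : ∀ e s, 0 < y e s) (hycont : ∀ e, Continuous (y e))
    (A : U → Matrix E E ℝ) (hA : ∃ K : ℝ, ∀ s e f, |A s e f| ≤ K)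
    (hMinv : ∀ s : U, IsUnit
      (rmat M * (Matrix.diagonal (fun e => y e s) + A s) * (rmat M)ᵀ).det)
    (hNinv : ∀ s : U, IsUnit
      (Matrix.of N * (Matrix.diagonal (fun e => y e s) + A s) * (Matrix.of N)ᵀ).det) :
    ∃ c C : ℝ, 0 < c ∧ 0 < C ∧ ∀ s : U, (∀ e, C ≤ y e s) →
      |(Matrix.of N * (Matrix.diagonal (fun e => y e s) + A s) * (Matrix.of N)ᵀ).det /
          (rmat M * (Matrix.diagonal (fun e => y e s) + A s) * (rmat M)ᵀ).det -
        (Matrix.of N * Matrix.diagonal (fun e => y e s) * (Matrix.of N)ᵀ).det /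
          (rmat M * Matrix.diagonal (fun e => y e s) * (rmat M)ᵀ).det| ≤ c := by
  classical
  by_cases hUe : Nonempty U
  case neg => exact ⟨1, 1, one_pos, one_pos, fun s _ => (hUe ⟨s⟩).elim⟩
  obtain ⟨s₀⟩ := hUe
  obtain ⟨K0, hK0⟩ := hA
  set Kb := max K0 0 with hKbdef
  have hKb0 : (0:ℝ) ≤ Kb := le_max_right _ _
  have hKb : ∀ s e f, |A s e f| ≤ Kb := fun s e f => (hK0 s e f).trans (le_max_left _ _)
  set W := rmat M with hWdef
  have hN1' : ∀ i : Fin h, (Matrix.of N) i.castSucc = W i := by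
    intro i
    funext e
    rw [hWdef]
    simpa [rmat] using congrFun (hN1 i) e
  have hN2' : (Matrix.of N) (Fin.last h) = ω := hN2
  -- W has full row rank, i.e. W * Wᵀ is invertible
  have hWWT : IsUnit (W * Wᵀ).det := by
    rw [isUnit_iff_ne_zero]
    intro h0
    obtain ⟨v, hv0, hv⟩ := Matrix.exists_mulVec_eq_zero_iff.mpr h0
    have hWt : Wᵀ *ᵥ v = 0 := by
      have h1 : v ⬝ᵥ ((W * Wᵀ) *ᵥ v) = 0 := by rw [hv, dotProduct_zero]
      rw [← Matrix.mulVec_mulVec, aux_flip] at h1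
      exact aux_dot_self_eq_zero _ h1
    have hzero : (W * (Matrix.diagonal (fun e => y e s₀) + A s₀)ᵀ * Wᵀ) *ᵥ v = 0 := by
      rw [Matrix.mul_assoc, ← Matrix.mulVec_mulVec, ← Matrix.mulVec_mulVec, hWt,
        Matrix.mulVec_zero, Matrix.mulVec_zero]
    have hdet0 : (W * (Matrix.diagonal (fun e => y e s₀) + A s₀) * Wᵀ).det = 0 := by
      have h2 : (W * (Matrix.diagonal (fun e => y e s₀) + A s₀) * Wᵀ)ᵀ
          = W * (Matrix.diagonal (fun e => y e s₀) + A s₀)ᵀ * Wᵀ := by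
        rw [Matrix.transpose_mul, Matrix.transpose_mul, Matrix.transpose_transpose,
          Matrix.mul_assoc]
      rw [← Matrix.det_transpose, h2]
      exact Matrix.exists_mulVec_eq_zero_iff.mp ⟨v, hv0, hzero⟩
    exact (hMinv s₀).ne_zero hdet0
  set L := (W * Wᵀ)⁻¹ * W with hLdef
  have hLW : L * Wᵀ = 1 := by
    rw [hLdef, Matrix.mul_assoc]
    exact Matrix.nonsing_inv_mul _ hWWT
  have hxL : ∀ x : Fin h → ℝ, L *ᵥ (Wᵀ *ᵥ x) = x := fun x => by
    rw [Matrix.mulVec_mulVec, hLW, Matrix.one_mulVec]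
  set cL := ∑ i, ∑ e, (L i e) ^ 2 with hcLdef
  have hcL0 : 0 ≤ cL :=
    Finset.sum_nonneg fun i _ => Finset.sum_nonneg fun e _ => sq_nonneg _
  have hxx : ∀ x : Fin h → ℝ, x ⬝ᵥ x ≤ cL * ((Wᵀ *ᵥ x) ⬝ᵥ (Wᵀ *ᵥ x)) := by
    intro x
    have := aux_quad_compare L (Wᵀ *ᵥ x)
    rwa [hxL x] at this
  -- the constants
  set mr := (Fintype.card E : ℝ) with hmrdef
  have hmr0 : 0 ≤ mr := Nat.cast_nonneg _
  set kr := (h : ℝ) with hkrdef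
  have hkr0 : 0 ≤ kr := Nat.cast_nonneg _
  set C := max 1 (mr * Kb + cL + 1) with hCdef
  have hC1 : (1:ℝ) ≤ C := le_max_left _ _
  have hC0 : (0:ℝ) < C := lt_of_lt_of_le one_pos hC1
  have hC2 : mr * Kb + cL + 1 ≤ C := le_max_right _ _
  obtain ⟨bW, hbW0, hbW⟩ := aux_mat_bound W
  have hbWT : ∀ e i, |Wᵀ e i| ≤ bW := fun e i => hbW i e
  obtain ⟨bω, hbω0, hbω⟩ := aux_vec_bound ω
  set B := ∑ i : Fin h, auxB W (W.updateRow i ω) with hBdef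
  have hB0 : 0 ≤ B := Finset.sum_nonneg fun i _ => auxB_nonneg _ _
  have hBi : ∀ i : Fin h, auxB W (W.updateRow i ω) ≤ B := fun i =>
    Finset.single_le_sum (fun j _ => auxB_nonneg W (W.updateRow j ω)) (Finset.mem_univ i)
  set b1 := mr * Kb * bω with hb1def
  have hb10 : 0 ≤ b1 := mul_nonneg (mul_nonneg hmr0 hKb0) hbω0
  set bu := mr * bW * b1 with hbudef
  have hbu0 : 0 ≤ bu := mul_nonneg (mul_nonneg hmr0 hbW0) hb10
  set br := bu + mr * bW * (mr * Kb * (kr * bW * B)) with hbrdef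
  have hbr0 : 0 ≤ br := add_nonneg hbu0 (mul_nonneg (mul_nonneg hmr0 hbW0)
    (mul_nonneg (mul_nonneg hmr0 hKb0) (mul_nonneg (mul_nonneg hkr0 hbW0) hB0)))
  set bz := B + kr * br with hbzdef
  have hbz0 : 0 ≤ bz := add_nonneg hB0 (mul_nonneg hkr0 hbr0)
  set bPz := mr * bW * (mr * Kb * (kr * bW * bz)) with hbPzdef
  have hbPz0 : 0 ≤ bPz := mul_nonneg (mul_nonneg hmr0 hbW0)
    (mul_nonneg (mul_nonneg hmr0 hKb0) (mul_nonneg (mul_nonneg hkr0 hbW0) hbz0))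
  set c := mr * bω * b1 + kr * B * bPz + kr * B * bu + kr * bu * bz + 1 with hcdef
  have hc0 : 0 < c := by
    have t1 : 0 ≤ mr * bω * b1 := mul_nonneg (mul_nonneg hmr0 hbω0) hb10
    have t2 : 0 ≤ kr * B * bPz := mul_nonneg (mul_nonneg hkr0 hB0) hbPz0
    have t3 : 0 ≤ kr * B * bu := mul_nonneg (mul_nonneg hkr0 hB0) hbu0
    have t4 : 0 ≤ kr * bu * bz := mul_nonneg (mul_nonneg hkr0 hbu0) hbz0
    rw [hcdef]; linarith
  refine ⟨c, C, hc0, hC0, ?_⟩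
  intro s hy
  set D := Matrix.diagonal (fun e => y e s) with hDdef
  set As := A s with hAsdef
  have hy0 : ∀ e, (0:ℝ) ≤ y e s := fun e => le_trans (le_of_lt hC0) (hy e)
  -- quadratic lower bounds
  have hgD : ∀ g : E → ℝ, C * (g ⬝ᵥ g) ≤ (D *ᵥ g) ⬝ᵥ g := by
    intro g
    have : (D *ᵥ g) ⬝ᵥ g = ∑ e, (y e s * g e) * g e := by
      refine Finset.sum_congr rfl fun e _ => ?_
      rw [hDdef, Matrix.mulVec_diagonal]
    rw [this, show g ⬝ᵥ g = ∑ e, g e * g e from rfl, Finset.mul_sum]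
    refine Finset.sum_le_sum fun e _ => ?_
    have := mul_le_mul_of_nonneg_right (hy e) (mul_self_nonneg (g e))
    nlinarith [this]
  have hquad : ∀ (Z : Matrix E E ℝ), (∀ g : E → ℝ, cL * (g ⬝ᵥ g) ≤ (Z *ᵥ g) ⬝ᵥ g) →
      ∀ x : Fin h → ℝ, x ⬝ᵥ x ≤ x ⬝ᵥ ((W * Z * Wᵀ) *ᵥ x) := by
    intro Z hZ x
    have h1 : (W * Z * Wᵀ) *ᵥ x = W *ᵥ (Z *ᵥ (Wᵀ *ᵥ x)) := by
      rw [Matrix.mulVec_mulVec, Matrix.mulVec_mulVec, Matrix.mul_assoc]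
    rw [h1, aux_flip]
    exact le_trans (hxx x) (hZ (Wᵀ *ᵥ x))
  have hZ1 : ∀ g : E → ℝ, cL * (g ⬝ᵥ g) ≤ ((D + As) *ᵥ g) ⬝ᵥ g := by
    intro g
    have h1 := hgD g
    have h2 := aux_bilin As Kb hKb0 (hKb s) g
    have h3 : ((D + As) *ᵥ g) ⬝ᵥ g = (D *ᵥ g) ⬝ᵥ g + (As *ᵥ g) ⬝ᵥ g := by
      rw [Matrix.add_mulVec, add_dotProduct]
    have hgg := aux_dot_self_nonneg g
    have h4 := mul_le_mul_of_nonneg_right hC2 hgg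
    rw [h3]
    have h5 := abs_le.mp h2
    nlinarith [h5.1]
  have hZ0 : ∀ g : E → ℝ, cL * (g ⬝ᵥ g) ≤ (D *ᵥ g) ⬝ᵥ g := by
    intro g
    have h1 := hgD g
    have hgg := aux_dot_self_nonneg g
    have h4 := mul_le_mul_of_nonneg_right hC2 hgg
    nlinarith [mul_le_mul_of_nonneg_right hKb0 (mul_nonneg hmr0 hgg)]
  have hquadK1 : ∀ x : Fin h → ℝ, x ⬝ᵥ x ≤ x ⬝ᵥ ((W * (D + As) * Wᵀ) *ᵥ x) := hquad _ hZ1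
  have hquadK0 : ∀ x : Fin h → ℝ, x ⬝ᵥ x ≤ x ⬝ᵥ ((W * D * Wᵀ) *ᵥ x) := hquad _ hZ0
  have hK1unit : IsUnit (W * (D + As) * Wᵀ).det := hMinv s
  have hK0unit : IsUnit (W * D * Wᵀ).det := by
    rw [isUnit_iff_ne_zero]
    intro h0
    obtain ⟨v, hv0, hv⟩ := Matrix.exists_mulVec_eq_zero_iff.mpr h0
    have h1 := hquadK0 v
    rw [hv, dotProduct_zero] at h1
    have h2 := aux_dot_self_pos v hv0
    linarith
  -- Schur complement rewriting
  rw [aux_schur (Matrix.of N) W ω hN1' hN2' (D + As) hK1unit,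
    aux_schur (Matrix.of N) W ω hN1' hN2' D hK0unit,
    mul_div_cancel_left₀ _ hK1unit.ne_zero, mul_div_cancel_left₀ _ hK0unit.ne_zero]
  -- names for the pieces
  set b₀ := W *ᵥ (D *ᵥ ω) with hb₀def
  set u := W *ᵥ (As *ᵥ ω) with hudef
  set u' := W *ᵥ (Asᵀ *ᵥ ω) with hu'def
  set K₀ := W * D * Wᵀ with hK₀def
  set K₁ := W * (D + As) * Wᵀ with hK₁def
  set P := W * As * Wᵀ with hPdef
  set x₀ := K₀⁻¹ *ᵥ b₀ with hx₀def
  set z := K₁⁻¹ *ᵥ (b₀ + u) with hzdef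
  have hsplit1 : W *ᵥ ((D + As) *ᵥ ω) = b₀ + u := by
    rw [Matrix.add_mulVec, Matrix.mulVec_add]
  have hsplit2 : W *ᵥ ((D + As)ᵀ *ᵥ ω) = b₀ + u' := by
    rw [Matrix.transpose_add, hDdef, Matrix.diagonal_transpose, Matrix.add_mulVec,
      Matrix.mulVec_add]
  have hωX : ω ⬝ᵥ ((D + As) *ᵥ ω) = ω ⬝ᵥ (D *ᵥ ω) + ω ⬝ᵥ (As *ᵥ ω) := by
    rw [Matrix.add_mulVec, dotProduct_add]
  have hDT : Dᵀ = D := by rw [hDdef, Matrix.diagonal_transpose]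
  have hKsplit : K₁ = K₀ + P := by
    rw [hK₁def, hK₀def, hPdef, Matrix.mul_add, Matrix.add_mul]
  have hK₀x₀ : K₀ *ᵥ x₀ = b₀ := by
    rw [hx₀def, Matrix.mulVec_mulVec, Matrix.mul_nonsing_inv _ hK0unit, Matrix.one_mulVec]
  have hK₁z : K₁ *ᵥ z = b₀ + u := by
    rw [hzdef, Matrix.mulVec_mulVec, Matrix.mul_nonsing_inv _ hK1unit, Matrix.one_mulVec]
  have hK₀sym : K₀ᵀ = K₀ := by
    rw [hK₀def, Matrix.transpose_mul, Matrix.transpose_mul, Matrix.transpose_transpose,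
      hDT, Matrix.mul_assoc]
  have hb₀dot : ∀ w : Fin h → ℝ, b₀ ⬝ᵥ w = x₀ ⬝ᵥ (K₀ *ᵥ w) := by
    intro w
    calc b₀ ⬝ᵥ w = (K₀ *ᵥ x₀) ⬝ᵥ w := by rw [hK₀x₀]
      _ = w ⬝ᵥ (K₀ *ᵥ x₀) := dotProduct_comm _ _
      _ = x₀ ⬝ᵥ (K₀ᵀ *ᵥ w) := aux_flip _ _ _
      _ = x₀ ⬝ᵥ (K₀ *ᵥ w) := by rw [hK₀sym]
  have hzx : z = x₀ + K₁⁻¹ *ᵥ (u - P *ᵥ x₀) := by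
    have h1 : K₁ *ᵥ (x₀ + K₁⁻¹ *ᵥ (u - P *ᵥ x₀)) = b₀ + u := by
      rw [Matrix.mulVec_add, Matrix.mulVec_mulVec (u - P *ᵥ x₀) K₁ K₁⁻¹,
        Matrix.mul_nonsing_inv _ hK1unit, Matrix.one_mulVec, hKsplit, Matrix.add_mulVec, hK₀x₀]
      abel
    calc z = K₁⁻¹ *ᵥ (b₀ + u) := rfl
      _ = K₁⁻¹ *ᵥ (K₁ *ᵥ (x₀ + K₁⁻¹ *ᵥ (u - P *ᵥ x₀))) := by rw [h1]
      _ = x₀ + K₁⁻¹ *ᵥ (u - P *ᵥ x₀) := by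
          rw [Matrix.mulVec_mulVec, Matrix.nonsing_inv_mul _ hK1unit, Matrix.one_mulVec]
  -- the difference of Schur complements
  rw [hsplit1, hsplit2, hωX, hDT, hb₀def]
  have hfinal : (ω ⬝ᵥ (D *ᵥ ω) + ω ⬝ᵥ (As *ᵥ ω) - (b₀ + u') ⬝ᵥ (K₁⁻¹ *ᵥ (b₀ + u)))
      - (ω ⬝ᵥ (D *ᵥ ω) - b₀ ⬝ᵥ (K₀⁻¹ *ᵥ b₀))
      = ω ⬝ᵥ (As *ᵥ ω) + (x₀ ⬝ᵥ (P *ᵥ z) - x₀ ⬝ᵥ u) - u' ⬝ᵥ z := by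
    have h1 : (b₀ + u') ⬝ᵥ z = b₀ ⬝ᵥ z + u' ⬝ᵥ z := add_dotProduct _ _ _
    have h4 : K₀ *ᵥ z = (b₀ + u) - P *ᵥ z := by
      have h4a := hK₁z
      rw [hKsplit, Matrix.add_mulVec] at h4a
      rw [← h4a]
      abel
    have h5 : b₀ ⬝ᵥ z = x₀ ⬝ᵥ b₀ + x₀ ⬝ᵥ u - x₀ ⬝ᵥ (P *ᵥ z) := by
      rw [hb₀dot z, h4, dotProduct_sub, dotProduct_add]
    have h6 : b₀ ⬝ᵥ x₀ = x₀ ⬝ᵥ b₀ := dotProduct_comm _ _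
    rw [← hzdef, ← hx₀def, h1, h5, h6]
    ring
  rw [hfinal]
  -- entrywise bounds
  have hAse : ∀ e f, |As e f| ≤ Kb := hKb s
  have hAsTe : ∀ e f, |Asᵀ e f| ≤ Kb := fun e f => hKb s f e
  have hb1e : ∀ e, |(As *ᵥ ω) e| ≤ b1 := by
    intro e
    rw [hb1def]
    exact aux_mulVec_bound As ω Kb bω hKb0 hAse hbω e
  have hb1e' : ∀ e, |(Asᵀ *ᵥ ω) e| ≤ b1 := by
    intro e
    rw [hb1def]
    exact aux_mulVec_bound Asᵀ ω Kb bω hKb0 hAsTe hbω e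
  have hue : ∀ i, |u i| ≤ bu := by
    intro i
    rw [hbudef, hudef]
    exact aux_mulVec_bound W _ bW b1 hbW0 hbW hb1e i
  have hu'e : ∀ i, |u' i| ≤ bu := by
    intro i
    rw [hbudef, hu'def]
    exact aux_mulVec_bound W _ bW b1 hbW0 hbW hb1e' i
  have hx₀e : ∀ i, |x₀ i| ≤ B := by
    intro i
    have h1 : x₀ = K₀⁻¹ *ᵥ ((W * D) *ᵥ ω) := by
      rw [hx₀def, hb₀def, Matrix.mulVec_mulVec ω W D]
    rw [h1, hK₀def, hDdef]
    exact le_trans (aux_solution_bound W ω (fun e => y e s) hy0 (by rw [← hDdef, ← hK₀def]; exact hK0unit) i) (hBi i)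
  have hWTx₀ : ∀ e, |(Wᵀ *ᵥ x₀) e| ≤ kr * bW * B := by
    intro e
    have := aux_mulVec_bound Wᵀ x₀ bW B hbW0 hbWT hx₀e e
    rwa [Fintype.card_fin] at this
  have hPx₀ : ∀ i, |(P *ᵥ x₀) i| ≤ mr * bW * (mr * Kb * (kr * bW * B)) := by
    intro i
    have h1 : P *ᵥ x₀ = W *ᵥ (As *ᵥ (Wᵀ *ᵥ x₀)) := by
      rw [hPdef, Matrix.mul_assoc, ← Matrix.mulVec_mulVec x₀ W (As * Wᵀ),
        ← Matrix.mulVec_mulVec x₀ As Wᵀ]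
    rw [h1]
    refine aux_mulVec_bound W _ bW _ hbW0 hbW (fun e => ?_) i
    exact aux_mulVec_bound As _ Kb _ hKb0 hAse hWTx₀ e
  have hre : ∀ i, |(u - P *ᵥ x₀) i| ≤ br := by
    intro i
    rw [hbrdef]
    calc |(u - P *ᵥ x₀) i| ≤ |u i| + |(P *ᵥ x₀) i| := by
          rw [Pi.sub_apply]; exact abs_sub _ _
      _ ≤ bu + mr * bW * (mr * Kb * (kr * bW * B)) := add_le_add (hue i) (hPx₀ i)
  have hze : ∀ i, |z i| ≤ bz := by
    intro i
    rw [hzx, hbzdef]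
    calc |(x₀ + K₁⁻¹ *ᵥ (u - P *ᵥ x₀)) i| ≤ |x₀ i| + |(K₁⁻¹ *ᵥ (u - P *ᵥ x₀)) i| := by
          rw [Pi.add_apply]; exact abs_add_le _ _
      _ ≤ B + kr * br := by
          refine add_le_add (hx₀e i) ?_
          rw [hkrdef]
          exact aux_quad_inv_bound K₁ hK1unit hquadK1 _ br hbr0 hre i
  have hPz : ∀ i, |(P *ᵥ z) i| ≤ bPz := by
    intro i
    have h1 : P *ᵥ z = W *ᵥ (As *ᵥ (Wᵀ *ᵥ z)) := by
      rw [hPdef, Matrix.mul_assoc, ← Matrix.mulVec_mulVec z W (As * Wᵀ),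
        ← Matrix.mulVec_mulVec z As Wᵀ]
    have hWTz : ∀ e, |(Wᵀ *ᵥ z) e| ≤ kr * bW * bz := by
      intro e
      have := aux_mulVec_bound Wᵀ z bW bz hbW0 hbWT hze e
      rwa [Fintype.card_fin] at this
    rw [h1, hbPzdef]
    refine aux_mulVec_bound W _ bW _ hbW0 hbW (fun e => ?_) i
    exact aux_mulVec_bound As _ Kb _ hKb0 hAse hWTz e
  -- final estimate
  have hd1 : |ω ⬝ᵥ (As *ᵥ ω)| ≤ mr * bω * b1 := aux_dot_bound ω _ bω b1 hbω0 hbω hb1e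
  have hd2 : |x₀ ⬝ᵥ (P *ᵥ z)| ≤ kr * B * bPz := by
    have := aux_dot_bound x₀ _ B bPz hB0 hx₀e hPz
    rwa [Fintype.card_fin] at this
  have hd3 : |x₀ ⬝ᵥ u| ≤ kr * B * bu := by
    have := aux_dot_bound x₀ u B bu hB0 hx₀e hue
    rwa [Fintype.card_fin] at this
  have hd4 : |u' ⬝ᵥ z| ≤ kr * bu * bz := by
    have := aux_dot_bound u' z bu bz hbu0 hu'e hze
    rwa [Fintype.card_fin] at this
  calc |ω ⬝ᵥ (As *ᵥ ω) + (x₀ ⬝ᵥ (P *ᵥ z) - x₀ ⬝ᵥ u) - u' ⬝ᵥ z|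
      ≤ |ω ⬝ᵥ (As *ᵥ ω) + (x₀ ⬝ᵥ (P *ᵥ z) - x₀ ⬝ᵥ u)| + |u' ⬝ᵥ z| := abs_sub _ _
    _ ≤ |ω ⬝ᵥ (As *ᵥ ω)| + |x₀ ⬝ᵥ (P *ᵥ z) - x₀ ⬝ᵥ u| + |u' ⬝ᵥ z| := by
        have := abs_add_le (ω ⬝ᵥ (As *ᵥ ω)) ((x₀ ⬝ᵥ (P *ᵥ z)) - x₀ ⬝ᵥ u)
        linarith
    _ ≤ |ω ⬝ᵥ (As *ᵥ ω)| + (|x₀ ⬝ᵥ (P *ᵥ z)| + |x₀ ⬝ᵥ u|) + |u' ⬝ᵥ z| := by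
        have := abs_sub (x₀ ⬝ᵥ (P *ᵥ z)) (x₀ ⬝ᵥ u)
        linarith
    _ ≤ mr * bω * b1 + (kr * B * bPz + kr * B * bu) + kr * bu * bz := by
        linarith [hd1, hd2, hd3, hd4]
    _ ≤ c := by rw [hcdef]; linarith
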